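/- arXiv:2411.15769 — 2 statements merged into one kernel-verified Lean document; each statement's English description precedes it below -/
import Mathlib

section
/- Let σ = √L₂/2, r = 1/(4√L₂), ε₁ = min{1/96, √L₂/(16L₁)}·ε^{3/2}, ε₂ = (√L₂/12)·ε^{1/2}. Suppose ‖g‖ ≥ ε, ‖s‖ ≤ r‖g‖^{1/2}, (H + σ‖g‖^{1/2}I)s = −g, H + σ‖g‖^{1/2}I ⪰ 0, ‖H‖ ≤ L₁, ‖∇P(x) − g‖ ≤ ε₁, ‖∇²P(x) − H‖ ≤ ε₂ (operator norm), and ‖∇P(x+s) − g₊‖ ≤ ε₁, where H is self-adjoint. Then P(x+s) ≤ P(x) and ‖g₊‖ ≤ (1/3)‖g‖. -/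
noncomputable section

open RealInnerProductSpace

/-- `ℝⁿ` as a Euclidean space. -/
abbrev En (n : ℕ) := EuclideanSpace ℝ (Fin n)

/-- The Hessian of `P` at `x`, as the derivative of the gradient map. -/
def hessP {n : ℕ} (P : En n → ℝ) (x : En n) : En n →L[ℝ] En n := fderiv ℝ (gradient P) x

section Aux

variable {n : ℕ} {P : En n → ℝ}

lemma gradC1 (hP : ContDiff ℝ 2 P) : ContDiff ℝ 1 (gradient P) := by
  have h1 : ContDiff ℝ 1 (fderiv ℝ P) := hP.fderiv_right (by norm_num)
  exact ((InnerProductSpace.toDual ℝ (En n)).symm.contDiff).comp h1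

lemma hline (x s : En n) (t : ℝ) : HasDerivAt (fun t : ℝ => x + t • s) s t := by
  simpa using ((hasDerivAt_id t).smul_const s).const_add x

lemma hasDerivAt_gradLine (hP : ContDiff ℝ 2 P) (x s : En n) (t : ℝ) :
    HasDerivAt (fun t : ℝ => gradient P (x + t • s)) (hessP P (x + t • s) s) t := by
  have hd : DifferentiableAt ℝ (gradient P) (x + t • s) :=
    (gradC1 hP).differentiable (by norm_num) _
  simpa [hessP, Function.comp_def] using (hd.hasFDerivAt).comp_hasDerivAt t (hline x s t)

lemma hasDerivAt_Pline (hP : ContDiff ℝ 2 P) (x s : En n) (t : ℝ) :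
    HasDerivAt (fun t : ℝ => P (x + t • s)) ⟪gradient P (x + t • s), s⟫ t := by
  have hd : DifferentiableAt ℝ P (x + t • s) := hP.differentiable (by norm_num) _
  have hg := hd.hasGradientAt.hasFDerivAt.comp_hasDerivAt t (hline x s t)
  simpa [InnerProductSpace.toDual_apply_apply, Function.comp_def] using hg

end Aux

section Taylor

variable {n : ℕ} {P : En n → ℝ} {L₂ : ℝ}

lemma hessCont (hP : ContDiff ℝ 2 P) : Continuous (hessP P) :=
  (gradC1 hP).continuous_fderiv (by norm_num)

lemma taylor1 (hP : ContDiff ℝ 2 P) (hL₂ : 0 ≤ L₂)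
    (hhessLip : ∀ x x' : En n, ‖hessP P x - hessP P x'‖ ≤ L₂ * ‖x - x'‖)
    (x s : En n) :
    ‖gradient P (x + s) - gradient P x - hessP P x s‖ ≤ L₂ / 2 * ‖s‖ ^ 2 := by
  set f' : ℝ → En n := fun t => hessP P (x + t • s) s with hf'
  have hcontline : Continuous (fun t : ℝ => x + t • s) :=
    continuous_const.add (continuous_id.smul continuous_const)
  have hcont : Continuous f' :=
    (((hessCont hP).comp hcontline)).clm_apply continuous_const
  have hint : IntervalIntegrable f' MeasureTheory.volume 0 1 :=
    hcont.intervalIntegrable 0 1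
  have hFTC : ∫ t in (0:ℝ)..1, f' t = gradient P (x + s) - gradient P x := by
    have := intervalIntegral.integral_eq_sub_of_hasDerivAt
      (f := fun t : ℝ => gradient P (x + t • s)) (f' := f')
      (fun t _ => hasDerivAt_gradLine hP x s t) hint
    simpa using this
  have heqint : gradient P (x + s) - gradient P x - hessP P x s
      = ∫ t in (0:ℝ)..1, (f' t - hessP P x s) := by
    rw [intervalIntegral.integral_sub hint (intervalIntegrable_const),
      hFTC, intervalIntegral.integral_const]
    simp
  rw [heqint]
  have hbound : ∀ t ∈ Set.Ioc (0:ℝ) 1, ‖f' t - hessP P x s‖ ≤ L₂ * ‖s‖ ^ 2 * t := by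
    intro t ht
    have h1 : f' t - hessP P x s = (hessP P (x + t • s) - hessP P x) s := by
      simp [hf', ContinuousLinearMap.sub_apply]
    rw [h1]
    calc ‖(hessP P (x + t • s) - hessP P x) s‖
        ≤ ‖hessP P (x + t • s) - hessP P x‖ * ‖s‖ :=
          ContinuousLinearMap.le_opNorm _ _
      _ ≤ (L₂ * ‖x + t • s - x‖) * ‖s‖ := by
          gcongr; exact hhessLip _ _
      _ = L₂ * ‖s‖ ^ 2 * t := by
          have : ‖x + t • s - x‖ = t * ‖s‖ := by
            simp [norm_smul, abs_of_pos ht.1]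
          rw [this]; ring
  have hval : ∫ t in (0:ℝ)..1, L₂ * ‖s‖ ^ 2 * t = L₂ / 2 * ‖s‖ ^ 2 := by
    rw [intervalIntegral.integral_const_mul, integral_id]; ring
  calc ‖∫ t in (0:ℝ)..1, (f' t - hessP P x s)‖
      ≤ |∫ t in (0:ℝ)..1, L₂ * ‖s‖ ^ 2 * t| := by
        apply intervalIntegral.norm_integral_le_abs_of_norm_le
        · filter_upwards [MeasureTheory.self_mem_ae_restrict
            (by simp [Set.uIoc_of_le] : MeasurableSet (Set.uIoc (0:ℝ) 1))] with t ht
          exact hbound t (by simpa [Set.uIoc_of_le (by norm_num : (0:ℝ) ≤ 1)] using ht)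
        · exact (continuous_const.mul continuous_id).intervalIntegrable 0 1
    _ = L₂ / 2 * ‖s‖ ^ 2 := by
        rw [hval]; exact abs_of_nonneg (by positivity)

end Taylor

section Taylor2

variable {n : ℕ} {P : En n → ℝ} {L₂ : ℝ}

lemma taylor2 (hP : ContDiff ℝ 2 P) (hL₂ : 0 ≤ L₂)
    (hhessLip : ∀ x x' : En n, ‖hessP P x - hessP P x'‖ ≤ L₂ * ‖x - x'‖)
    (x s : En n) :
    P (x + s) ≤ P x + ⟪gradient P x, s⟫ + 1 / 2 * ⟪hessP P x s, s⟫
      + L₂ / 6 * ‖s‖ ^ 3 := by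
  have hgradcont : Continuous (gradient P) := (gradC1 hP).continuous
  have hcontline : Continuous (fun t : ℝ => x + t • s) :=
    continuous_const.add (continuous_id.smul continuous_const)
  set q : ℝ → ℝ := fun t => ⟪gradient P (x + t • s) - gradient P x - t • (hessP P x s), s⟫
    with hq
  have hqcont : Continuous q := by
    apply Continuous.inner _ continuous_const
    exact ((hgradcont.comp hcontline).sub continuous_const).sub
      (continuous_id.smul continuous_const)
  have hint1 : IntervalIntegrable (fun t : ℝ => ⟪gradient P (x + t • s), s⟫)
      MeasureTheory.volume 0 1 :=
    ((Continuous.inner (hgradcont.comp hcontline) continuous_const)).intervalIntegrable 0 1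
  have hFTC : ∫ t in (0:ℝ)..1, ⟪gradient P (x + t • s), s⟫ = P (x + s) - P x := by
    have := intervalIntegral.integral_eq_sub_of_hasDerivAt
      (f := fun t : ℝ => P (x + t • s))
      (fun t _ => hasDerivAt_Pline hP x s t) hint1
    simpa using this
  have hsplit : ∫ t in (0:ℝ)..1, q t
      = (P (x + s) - P x) - ⟪gradient P x, s⟫ - 1 / 2 * ⟪hessP P x s, s⟫ := by
    have h2 : ∀ t : ℝ, q t = ⟪gradient P (x + t • s), s⟫ - ⟪gradient P x, s⟫
        - t * ⟪hessP P x s, s⟫ := by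
      intro t
      simp only [hq, inner_sub_left, real_inner_smul_left]
    simp only [h2]
    have e2 : IntervalIntegrable (fun t : ℝ => t * ⟪hessP P x s, s⟫)
        MeasureTheory.volume 0 1 :=
      (continuous_id.mul continuous_const).intervalIntegrable 0 1
    rw [intervalIntegral.integral_sub (hint1.sub intervalIntegrable_const) e2,
      intervalIntegral.integral_sub hint1 intervalIntegrable_const,
      hFTC, intervalIntegral.integral_const, intervalIntegral.integral_mul_const, integral_id]
    simp
  have hbound : ∀ t ∈ Set.Ioc (0:ℝ) 1, ‖q t‖ ≤ L₂ / 2 * ‖s‖ ^ 3 * t ^ 2 := by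
    intro t ht
    have h1 : gradient P (x + t • s) - gradient P x - t • (hessP P x s)
        = gradient P (x + t • s) - gradient P x - hessP P x (t • s) := by
      simp [map_smul]
    have h2 := taylor1 hP hL₂ hhessLip x (t • s)
    rw [hq]
    calc ‖⟪gradient P (x + t • s) - gradient P x - t • hessP P x s, s⟫‖
        ≤ ‖gradient P (x + t • s) - gradient P x - t • hessP P x s‖ * ‖s‖ :=
          norm_inner_le_norm _ _
      _ ≤ (L₂ / 2 * ‖t • s‖ ^ 2) * ‖s‖ := by rw [h1]; gcongr
      _ = L₂ / 2 * ‖s‖ ^ 3 * t ^ 2 := by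
          rw [norm_smul, Real.norm_eq_abs, abs_of_pos ht.1]; ring
  have hval : ∫ t in (0:ℝ)..1, L₂ / 2 * ‖s‖ ^ 3 * t ^ 2 = L₂ / 6 * ‖s‖ ^ 3 := by
    rw [intervalIntegral.integral_const_mul, integral_pow]; norm_num; ring
  have hile : ∫ t in (0:ℝ)..1, q t ≤ L₂ / 6 * ‖s‖ ^ 3 := by
    calc ∫ t in (0:ℝ)..1, q t ≤ ‖∫ t in (0:ℝ)..1, q t‖ := le_abs_self _
      _ ≤ |∫ t in (0:ℝ)..1, L₂ / 2 * ‖s‖ ^ 3 * t ^ 2| := by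
          apply intervalIntegral.norm_integral_le_abs_of_norm_le
          · filter_upwards [MeasureTheory.self_mem_ae_restrict
              (by simp [Set.uIoc_of_le] : MeasurableSet (Set.uIoc (0:ℝ) 1))] with t ht
            exact hbound t (by simpa [Set.uIoc_of_le (by norm_num : (0:ℝ) ≤ 1)] using ht)
          · exact ((continuous_const.mul (continuous_pow 2))).intervalIntegrable 0 1
      _ = L₂ / 6 * ‖s‖ ^ 3 := by rw [hval]; exact abs_of_nonneg (by positivity)
  linarith [hsplit ▸ hile]

end Taylor2

section CS

lemma psd_cs {n : ℕ} (M : En n →L[ℝ] En n)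
    (hsym : ∀ v w : En n, ⟪M v, w⟫ = ⟪v, M w⟫)
    (hpsd : ∀ v : En n, 0 ≤ ⟪M v, v⟫) (s : En n) :
    ‖M s‖ ^ 2 ≤ ‖M‖ * ⟪M s, s⟫ := by
  set u := M s with hu
  rcases eq_or_ne u 0 with h0 | h0
  · rw [h0]
    simp only [norm_zero, inner_zero_left, mul_zero, pow_two, le_refl]
  · have hupos : 0 < ‖u‖ := norm_pos_iff.2 h0
    have hquad : ∀ a : ℝ, 0 ≤ ⟪M u, u⟫ * (a * a) + (2 * ‖u‖ ^ 2) * a + ⟪M s, s⟫ := by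
      intro a
      have hx := hpsd (s + a • u)
      have hexp : ⟪M (s + a • u), s + a • u⟫
          = ⟪M u, u⟫ * (a * a) + (2 * ‖u‖ ^ 2) * a + ⟪M s, s⟫ := by
        have h1 : ⟪M s, u⟫ = ‖u‖ ^ 2 := by
          rw [← hu, real_inner_self_eq_norm_sq]
        have h2 : ⟪M u, s⟫ = ‖u‖ ^ 2 := by
          rw [hsym u s, real_inner_comm, ← hu, real_inner_self_eq_norm_sq]
        simp only [map_add, map_smul, inner_add_left, inner_add_right,
          real_inner_smul_left, real_inner_smul_right, h1, h2]
        ring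
      linarith [hexp ▸ hx]
    have hdisc := discrim_le_zero hquad
    rw [discrim] at hdisc
    have hMu : ⟪M u, u⟫ ≤ ‖M‖ * ‖u‖ ^ 2 := by
      calc ⟪M u, u⟫ ≤ ‖M u‖ * ‖u‖ := real_inner_le_norm _ _
        _ ≤ (‖M‖ * ‖u‖) * ‖u‖ := by gcongr; exact M.le_opNorm u
        _ = ‖M‖ * ‖u‖ ^ 2 := by ring
    have hMss : 0 ≤ ⟪M s, s⟫ := hpsd s
    rw [hu] at hdisc hMu hupos ⊢
    nlinarith [hdisc, hMu, hMss, mul_pos hupos hupos, sq_nonneg ‖M s‖]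

end CS

set_option maxHeartbeats 2000000 in
theorem statement10_aux {n : ℕ} (P : En n → ℝ) (L₁ L₂ ε : ℝ)
    (hL₁ : 0 < L₁) (hL₂ : 0 < L₂) (hε : 0 < ε)
    (hP : ContDiff ℝ 2 P)
    (hgradLip : ∀ x x' : En n, ‖gradient P x - gradient P x'‖ ≤ L₁ * ‖x - x'‖)
    (hhessLip : ∀ x x' : En n, ‖hessP P x - hessP P x'‖ ≤ L₂ * ‖x - x'‖)
    (x s g gp : En n) (H : En n →L[ℝ] En n) (hH : IsSelfAdjoint H)
    (hg : ε ≤ ‖g‖)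
    (hs : ‖s‖ ≤ 1 / (4 * Real.sqrt L₂) * Real.sqrt ‖g‖)
    (heq : (H + (Real.sqrt L₂ / 2 * Real.sqrt ‖g‖) • (1 : En n →L[ℝ] En n)) s = -g)
    (hpsd : ∀ v : En n,
      0 ≤ ⟪(H + (Real.sqrt L₂ / 2 * Real.sqrt ‖g‖) • (1 : En n →L[ℝ] En n)) v, v⟫)
    (hHnorm : ‖H‖ ≤ L₁)
    (hge : ‖gradient P x - g‖ ≤ min (1 / 96) (Real.sqrt L₂ / (16 * L₁)) * ε ^ ((3 : ℝ) / 2))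
    (hHe : ‖hessP P x - H‖ ≤ Real.sqrt L₂ / 12 * Real.sqrt ε)
    (hge' : ‖gradient P (x + s) - gp‖ ≤
      min (1 / 96) (Real.sqrt L₂ / (16 * L₁)) * ε ^ ((3 : ℝ) / 2)) :
    P (x + s) ≤ P x ∧ ‖gp‖ ≤ 1 / 3 * ‖g‖ := by
  set sL := Real.sqrt L₂ with hsLdef
  set sq := Real.sqrt ‖g‖ with hsqdef
  set se := Real.sqrt ε with hsedef
  have hsL : 0 < sL := Real.sqrt_pos.2 hL₂
  have hG : (0:ℝ) < ‖g‖ := lt_of_lt_of_le hε hg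
  have hsq : 0 < sq := Real.sqrt_pos.2 hG
  have hse : 0 < se := Real.sqrt_pos.2 hε
  have hsq2 : sq ^ 2 = ‖g‖ := Real.sq_sqrt hG.le
  have hse2 : se ^ 2 = ε := Real.sq_sqrt hε.le
  have hsL2 : sL ^ 2 = L₂ := Real.sq_sqrt hL₂.le
  have hsesq : se ≤ sq := Real.sqrt_le_sqrt hg
  have ha : (0:ℝ) ≤ ‖s‖ := norm_nonneg s
  have he32 : ε ^ ((3 : ℝ) / 2) = se ^ 3 := by
    rw [hsedef, show ((3:ℝ)/2) = (1/2)*(3:ℝ) by norm_num, Real.rpow_mul hε.le,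
      ← Real.sqrt_eq_rpow, show ((3:ℝ)) = ((3:ℕ):ℝ) by norm_num, Real.rpow_natCast]
  have hmin1 : min (1/96) (sL/(16*L₁)) * ε ^ ((3:ℝ)/2) ≤ sL/(16*L₁) * se^3 := by
    rw [he32]
    exact mul_le_mul_of_nonneg_right (min_le_right _ _) (by positivity)
  clear_value sL sq se
  have hsL0 : sL ≠ 0 := ne_of_gt hsL
  have hL₁0 : L₁ ≠ 0 := ne_of_gt hL₁
  set M := H + (sL / 2 * sq) • (1 : En n →L[ℝ] En n) with hMdef
  clear_value M
  have hMs : M s = -g := heq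
  have hMapp : ∀ v : En n, M v = H v + (sL/2*sq) • v := by
    intro v
    simp [hMdef, ContinuousLinearMap.add_apply, ContinuousLinearMap.smul_apply,
      ContinuousLinearMap.one_apply]
  have hHsym := ContinuousLinearMap.isSelfAdjoint_iff_isSymmetric.1 hH
  have hMsym : ∀ v w : En n, ⟪M v, w⟫ = ⟪v, M w⟫ := by
    intro v w
    have h' : ⟪H v, w⟫ = ⟪v, H w⟫ := hHsym v w
    rw [hMapp v, hMapp w, inner_add_left, inner_add_right, real_inner_smul_left,
      real_inner_smul_right, h']
  have hσ : (0:ℝ) ≤ sL/2*sq := by positivity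
  have hMnorm : ‖M‖ ≤ L₁ + sL/2*sq := by
    have h1 : ‖(1 : En n →L[ℝ] En n)‖ ≤ 1 := by
      rw [ContinuousLinearMap.one_def]; exact ContinuousLinearMap.norm_id_le
    have h2 : ‖(sL/2*sq) • (1 : En n →L[ℝ] En n)‖ ≤ sL/2*sq := by
      refine le_trans (ContinuousLinearMap.opNorm_smul_le _ _) ?_
      rw [Real.norm_eq_abs, abs_of_nonneg hσ]
      nlinarith [hσ, h1]
    calc ‖M‖ ≤ ‖H‖ + ‖(sL/2*sq) • (1 : En n →L[ℝ] En n)‖ := by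
          rw [hMdef]; exact norm_add_le _ _
      _ ≤ L₁ + sL/2*sq := add_le_add hHnorm h2
  have hgMs : ‖g‖ ≤ ‖M‖ * ‖s‖ := by
    calc ‖g‖ = ‖M s‖ := by rw [hMs, norm_neg]
      _ ≤ ‖M‖ * ‖s‖ := M.le_opNorm s
  have hkey : sL * sq ≤ 2/7 * L₁ := by
    have h1 : ‖g‖ ≤ (L₁ + sL/2*sq) * (1/(4*sL)*sq) :=
      le_trans hgMs (mul_le_mul hMnorm hs ha (by positivity))
    have h1' : (4*sL) * ‖g‖ ≤ (L₁ + sL/2*sq) * sq := by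
      have h3 := mul_le_mul_of_nonneg_left h1 (by positivity : (0:ℝ) ≤ 4*sL)
      calc (4*sL)*‖g‖ ≤ (4*sL) * ((L₁ + sL/2*sq) * (1/(4*sL)*sq)) := h3
        _ = (L₁ + sL/2*sq) * sq := by field_simp
    rw [← hsq2] at h1'
    have h4 : (7/2*(sL*sq))*sq ≤ L₁*sq := by nlinarith [h1']
    have h5 : 7/2*(sL*sq) ≤ L₁ := by
      exact le_of_mul_le_mul_right (by linarith) hsq
    linarith
  have hM87 : ‖M‖ ≤ 8/7*L₁ := by nlinarith [hMnorm, hkey]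
  have hDpos : (0:ℝ) ≤ -⟪g, s⟫ := by
    have h := hpsd s
    rw [hMs, inner_neg_left] at h
    linarith
  have hCS : ‖g‖^2 ≤ (8/7*L₁) * (-⟪g,s⟫) := by
    have h1 := psd_cs M hMsym hpsd s
    rw [hMs, norm_neg, inner_neg_left] at h1
    calc ‖g‖^2 ≤ ‖M‖ * -⟪g,s⟫ := h1
      _ ≤ (8/7*L₁) * -⟪g,s⟫ := mul_le_mul_of_nonneg_right hM87 hDpos
  have hge1 : ‖gradient P x - g‖ ≤ sL/(16*L₁)*se^3 := le_trans hge hmin1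
  have hge1' : ‖gradient P (x+s) - gp‖ ≤ sL/(16*L₁)*se^3 := le_trans hge' hmin1
  have hHs : H s = -g - (sL/2*sq) • s := by
    have h := hMs
    rw [hMapp s] at h
    exact eq_sub_of_add_eq h
  constructor
  · -- decrease
    have hT2 := taylor2 hP hL₂.le hhessLip x s
    have e1 : ⟪gradient P x, s⟫ ≤ ⟪g, s⟫ + (sL/(16*L₁)*se^3) * ‖s‖ := by
      have h1 : ⟪gradient P x, s⟫ - ⟪g,s⟫ = ⟪gradient P x - g, s⟫ := by
        rw [inner_sub_left]
      have h2 : ⟪gradient P x - g, s⟫ ≤ ‖gradient P x - g‖ * ‖s‖ := real_inner_le_norm _ _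
      have h3 : ‖gradient P x - g‖ * ‖s‖ ≤ (sL/(16*L₁)*se^3) * ‖s‖ :=
        mul_le_mul_of_nonneg_right hge1 ha
      linarith
    have e2 : ⟪hessP P x s, s⟫ ≤ ⟪H s, s⟫ + (sL/12*se)*‖s‖^2 := by
      have h1 : ⟪hessP P x s, s⟫ - ⟪H s, s⟫ = ⟪(hessP P x - H) s, s⟫ := by
        rw [ContinuousLinearMap.sub_apply, inner_sub_left]
      have h2 : ⟪(hessP P x - H) s, s⟫ ≤ ‖(hessP P x - H) s‖ * ‖s‖ := real_inner_le_norm _ _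
      have h3 : ‖(hessP P x - H) s‖ * ‖s‖ ≤ (‖hessP P x - H‖ * ‖s‖) * ‖s‖ :=
        mul_le_mul_of_nonneg_right ((hessP P x - H).le_opNorm s) ha
      have h4 : (‖hessP P x - H‖ * ‖s‖) * ‖s‖ ≤ ((sL/12*se) * ‖s‖) * ‖s‖ := by
        have := mul_le_mul_of_nonneg_right hHe ha
        exact mul_le_mul_of_nonneg_right this ha
      nlinarith [h1, h2, h3, h4]
    have e3 : ⟪H s, s⟫ = -⟪g,s⟫ - (sL/2*sq)*‖s‖^2 := by
      rw [hHs, inner_sub_left, inner_neg_left, real_inner_smul_left,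
        real_inner_self_eq_norm_sq]
    have c2 : (sL/(16*L₁)*se^3) * ‖s‖ * (64*L₁) ≤ ‖g‖^2 := by
      have h1 : (sL/(16*L₁)*se^3) * ‖s‖ * (64*L₁) = 4*sL*se^3*‖s‖ := by
        field_simp
        ring
      rw [h1]
      calc 4*sL*se^3*‖s‖ ≤ 4*sL*sq^3*(1/(4*sL)*sq) := by gcongr
        _ = sq^4 := by field_simp
        _ = ‖g‖^2 := by rw [← hsq2]; ring
    have clin : ⟪g,s⟫/2 + (sL/(16*L₁)*se^3)*‖s‖ ≤ 0 := by
      nlinarith [hCS, c2, hDpos, hL₁, mul_nonneg hL₁.le hDpos]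
    have h1 : L₂/6*‖s‖^3 ≤ sL*sq/24*‖s‖^2 := by
      have hh : L₂/6*‖s‖^3 = sL^2/6*‖s‖^2*‖s‖ := by rw [hsL2]; ring
      rw [hh]
      calc sL^2/6*‖s‖^2*‖s‖ ≤ sL^2/6*‖s‖^2*(1/(4*sL)*sq) := by gcongr
        _ = sL*sq/24*‖s‖^2 := by field_simp; ring
    have h2 : (sL/12*se)/2*‖s‖^2 ≤ sL*sq/24*‖s‖^2 := by
      have hh : (sL/12*se)/2*‖s‖^2 = sL*se/24*‖s‖^2 := by ring
      rw [hh]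
      gcongr
    have cquad : -((sL/2*sq)/2)*‖s‖^2 + (sL/12*se)/2*‖s‖^2 + L₂/6*‖s‖^3 ≤ 0 := by
      nlinarith [h1, h2, mul_nonneg (mul_nonneg hsL.le hsq.le) (sq_nonneg ‖s‖)]
    linarith [hT2, e1, e2, e3, clin, cquad]
  · -- gradient norm decrease
    have hT1 := taylor1 hP hL₂.le hhessLip x s
    have n1 : ‖gp - gradient P (x+s)‖ ≤ sL/(16*L₁)*se^3 := by
      rw [norm_sub_rev]; exact hge1'
    have n4 : ‖hessP P x s - H s‖ ≤ (sL/12*se)*‖s‖ := by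
      have h1 : hessP P x s - H s = (hessP P x - H) s := by
        rw [ContinuousLinearMap.sub_apply]
      rw [h1]
      calc ‖(hessP P x - H) s‖ ≤ ‖hessP P x - H‖ * ‖s‖ := (hessP P x - H).le_opNorm s
        _ ≤ (sL/12*se)*‖s‖ := mul_le_mul_of_nonneg_right hHe ha
    have n5 : ‖g + H s‖ = (sL/2*sq)*‖s‖ := by
      have h1 : g + H s = -((sL/2*sq) • s) := by rw [hHs]; abel
      rw [h1, norm_neg, norm_smul, Real.norm_eq_abs, abs_of_nonneg hσ]
    have hgpn : ‖gp‖ ≤ ‖gp - gradient P (x+s)‖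
        + ‖gradient P (x+s) - gradient P x - hessP P x s‖
        + ‖gradient P x - g‖ + ‖hessP P x s - H s‖ + ‖g + H s‖ := by
      have hid : gp = (gp - gradient P (x+s))
          + (gradient P (x+s) - gradient P x - hessP P x s)
          + (gradient P x - g) + (hessP P x s - H s) + (g + H s) := by abel
      calc ‖gp‖ = ‖(gp - gradient P (x+s))
          + (gradient P (x+s) - gradient P x - hessP P x s)
          + (gradient P x - g) + (hessP P x s - H s) + (g + H s)‖ := by rw [← hid]
        _ ≤ ‖(gp - gradient P (x+s))
          + (gradient P (x+s) - gradient P x - hessP P x s)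
          + (gradient P x - g) + (hessP P x s - H s)‖ + ‖g + H s‖ := norm_add_le _ _
        _ ≤ (‖(gp - gradient P (x+s))
          + (gradient P (x+s) - gradient P x - hessP P x s)
          + (gradient P x - g)‖ + ‖hessP P x s - H s‖) + ‖g + H s‖ := by
            gcongr; exact norm_add_le _ _
        _ ≤ ((‖(gp - gradient P (x+s))
          + (gradient P (x+s) - gradient P x - hessP P x s)‖
          + ‖gradient P x - g‖) + ‖hessP P x s - H s‖) + ‖g + H s‖ := by
            gcongr; exact norm_add_le _ _
        _ ≤ (((‖gp - gradient P (x+s)‖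
          + ‖gradient P (x+s) - gradient P x - hessP P x s‖)
          + ‖gradient P x - g‖) + ‖hessP P x s - H s‖) + ‖g + H s‖ := by
            gcongr; exact norm_add_le _ _
        _ = _ := by ring
    have m1 : sL/(16*L₁)*se^3 ≤ ‖g‖/56 := by
      have h1 : sL/(16*L₁)*se^3 ≤ sL/(16*L₁)*sq^3 := by gcongr
      have h2 : sL/(16*L₁)*sq^3 ≤ ‖g‖/56 := by
        rw [← hsq2]
        have hh : sL/(16*L₁)*sq^3 = (sL*sq*sq^2)/(16*L₁) := by ring
        rw [hh, div_le_div_iff₀ (by positivity) (by norm_num : (0:ℝ) < 56)]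
        nlinarith [mul_le_mul_of_nonneg_right hkey (sq_nonneg sq)]
      linarith
    have m2 : L₂/2*‖s‖^2 ≤ ‖g‖/32 := by
      calc L₂/2*‖s‖^2 ≤ L₂/2*(1/(4*sL)*sq)^2 := by gcongr
        _ = ‖g‖/32 := by rw [← hsq2, ← hsL2]; field_simp; ring
    have m3 : (sL/12*se)*‖s‖ ≤ ‖g‖/48 := by
      calc (sL/12*se)*‖s‖ ≤ (sL/12*sq)*(1/(4*sL)*sq) := by gcongr
        _ = ‖g‖/48 := by rw [← hsq2]; field_simp; ring
    have m4 : (sL/2*sq)*‖s‖ ≤ ‖g‖/8 := by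
      calc (sL/2*sq)*‖s‖ ≤ (sL/2*sq)*(1/(4*sL)*sq) := by gcongr
        _ = ‖g‖/8 := by rw [← hsq2]; field_simp; ring
    linarith [hgpn, n1, hT1, hge1, n4, n5, m1, m2, m3, m4, hG]

/-- With `σ = √L₂/2`, `r = 1/(4√L₂)`, `ε₁ = min{1/96, √L₂/(16L₁)}·ε^{3/2}`,
`ε₂ = (√L₂/12)·ε^{1/2}`: if `‖g‖ ≥ ε`, `‖s‖ ≤ r‖g‖^{1/2}`, `(H + σ‖g‖^{1/2}I)s = −g` with the
regularized operator PSD (dual multiplier `λ = 0`), `‖H‖ ≤ L₁`, and accurate estimates, then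
`P(x+s) ≤ P(x)` and `‖g₊‖ ≤ ‖g‖/3`. -/
theorem statement10 {n : ℕ} (P : En n → ℝ) (L₁ L₂ ε : ℝ)
    (hL₁ : 0 < L₁) (hL₂ : 0 < L₂) (hε : 0 < ε)
    (hP : ContDiff ℝ 2 P)
    (hgradLip : ∀ x x' : En n, ‖gradient P x - gradient P x'‖ ≤ L₁ * ‖x - x'‖)
    (hhessLip : ∀ x x' : En n, ‖hessP P x - hessP P x'‖ ≤ L₂ * ‖x - x'‖)
    (x s g gp : En n) (H : En n →L[ℝ] En n) (hH : IsSelfAdjoint H)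
    (hg : ε ≤ ‖g‖)
    (hs : ‖s‖ ≤ 1 / (4 * Real.sqrt L₂) * Real.sqrt ‖g‖)
    (heq : (H + (Real.sqrt L₂ / 2 * Real.sqrt ‖g‖) • (1 : En n →L[ℝ] En n)) s = -g)
    (hpsd : ∀ v : En n,
      0 ≤ ⟪(H + (Real.sqrt L₂ / 2 * Real.sqrt ‖g‖) • (1 : En n →L[ℝ] En n)) v, v⟫)
    (hHnorm : ‖H‖ ≤ L₁)
    (hge : ‖gradient P x - g‖ ≤ min (1 / 96) (Real.sqrt L₂ / (16 * L₁)) * ε ^ ((3 : ℝ) / 2))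
    (hHe : ‖hessP P x - H‖ ≤ Real.sqrt L₂ / 12 * Real.sqrt ε)
    (hge' : ‖gradient P (x + s) - gp‖ ≤
      min (1 / 96) (Real.sqrt L₂ / (16 * L₁)) * ε ^ ((3 : ℝ) / 2)) :
    P (x + s) ≤ P x ∧ ‖gp‖ ≤ 1 / 3 * ‖g‖ :=
  statement10_aux P L₁ L₂ ε hL₁ hL₂ hε hP hgradLip hhessLip x s g gp H hH hg hs heq hpsd
    hHnorm hge hHe hge'
end
end

section
/- Let ε₁ = min{1/36, √L₂/(12L₁)}·ε^{3/2} and ε₂ = (√L₂/18)·ε^{1/2} with ε ≤ 1, and set M = max{‖g‖, ε}. Suppose H is self-adjoint with smallest eigenvalue λ_min(H) ≤ −½√(L₂M), u is a unit eigenvector of H for λ_min(H) with ⟨g, u⟩ ≤ 0, and s = √(M/L₂)·u. If ‖∇P(x) − g‖ ≤ ε₁, ‖∇²P(x) − H‖ ≤ ε₂ (operator norm), and ‖∇P(x+s) − g₊‖ ≤ ε₁, then P(x+s) ≤ P(x) − (1/(36√L₂))·M^{3/2} and ‖g₊‖ ≤ 1 + (L₁/√L₂)·√M + M. -/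
noncomputable section

open RealInnerProductSpace

lemma taylor_cubic {n : ℕ} (P : En n → ℝ) (L₂ : ℝ) (hL₂ : 0 ≤ L₂) (hP : ContDiff ℝ 2 P)
    (hhessLip : ∀ y y' : En n, ‖hessP P y - hessP P y'‖ ≤ L₂ * ‖y - y'‖) (x s : En n) :
    P (x + s) ≤ P x + ⟪gradient P x, s⟫ + (1/2) * ⟪hessP P x s, s⟫ + L₂/6 * ‖s‖^3 := by
  have h1 : ContDiff ℝ 1 (fderiv ℝ P) := hP.fderiv_right (by norm_num)
  have hG : ContDiff ℝ 1 (gradient P) := (InnerProductSpace.toDual ℝ (En n)).symm.contDiff.comp h1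
  have hGc : Continuous (gradient P) := hG.continuous
  have hHc : Continuous (hessP P) := hG.continuous_fderiv one_ne_zero
  have hl : ∀ t : ℝ, HasDerivAt (fun t : ℝ => x + t • s) s t := fun t => by
    simpa using ((hasDerivAt_id t).smul_const s).const_add x
  have hlc : Continuous (fun t : ℝ => x + t • s) :=
    continuous_const.add (continuous_id.smul continuous_const)
  -- derivative of gradient along line
  have hGd : ∀ t : ℝ, HasDerivAt (fun t : ℝ => gradient P (x + t • s))
      (hessP P (x + t • s) s) t := fun t =>
    ((hG.differentiable one_ne_zero _).hasFDerivAt).comp_hasDerivAt t (hl t)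
  -- Step B: ‖G(x+t s) - G x - t • Hx s‖ ≤ L₂/2 t² ‖s‖²  for t ∈ [0,1]
  have stepB : ∀ t ∈ Set.Icc (0:ℝ) 1,
      ‖gradient P (x + t • s) - gradient P x - t • (hessP P x s)‖ ≤ L₂/2 * t^2 * ‖s‖^2 := by
    intro t ht
    obtain ⟨ht0, ht1⟩ := ht
    set χ : ℝ → En n := fun τ => gradient P (x + τ • s) - τ • (hessP P x s) with hχ
    have hχd : ∀ τ : ℝ, HasDerivAt χ (hessP P (x + τ • s) s - hessP P x s) τ := by
      intro τ
      have h2 : HasDerivAt (fun τ : ℝ => τ • (hessP P x s)) (hessP P x s) τ := by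
        simpa using (hasDerivAt_id τ).smul_const (hessP P x s)
      exact (hGd τ).sub h2
    have hcont : Continuous (fun τ : ℝ => hessP P (x + τ • s) s - hessP P x s) := by
      exact ((ContinuousLinearMap.apply ℝ (En n) s).continuous.comp (hHc.comp hlc)).sub
        continuous_const
    have hint : IntervalIntegrable (fun τ : ℝ => hessP P (x + τ • s) s - hessP P x s)
        MeasureTheory.volume 0 t := hcont.intervalIntegrable _ _
    have hFTC : χ t - χ 0 = ∫ τ in (0:ℝ)..t, (hessP P (x + τ • s) s - hessP P x s) :=
      (intervalIntegral.integral_eq_sub_of_hasDerivAt (fun τ _ => hχd τ) hint).symm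
    have hbd : ∀ τ ∈ Set.Icc (0:ℝ) t,
        ‖hessP P (x + τ • s) s - hessP P x s‖ ≤ L₂ * ‖s‖^2 * τ := by
      intro τ hτ
      have : hessP P (x + τ • s) s - hessP P x s = (hessP P (x + τ • s) - hessP P x) s := by
        simp
      rw [this]
      calc ‖(hessP P (x + τ • s) - hessP P x) s‖
          ≤ ‖hessP P (x + τ • s) - hessP P x‖ * ‖s‖ := ContinuousLinearMap.le_opNorm _ _
        _ ≤ (L₂ * ‖x + τ • s - x‖) * ‖s‖ := by
            gcongr; exact hhessLip _ _
        _ = L₂ * ‖s‖^2 * τ := by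
            have : x + τ • s - x = τ • s := by abel
            rw [this, norm_smul, Real.norm_eq_abs, abs_of_nonneg hτ.1]; ring
    have hival : (∫ τ in (0:ℝ)..t, L₂ * ‖s‖^2 * τ) = L₂ * ‖s‖^2 * (t^2/2) := by
      rw [intervalIntegral.integral_const_mul, integral_id]; ring
    have hnorm : ‖χ t - χ 0‖ ≤ L₂ * ‖s‖^2 * (t^2/2) := by
      rw [hFTC]
      have hle := intervalIntegral.norm_integral_le_of_norm_le (μ := MeasureTheory.volume)
        (f := fun τ => hessP P (x + τ • s) s - hessP P x s)
        (g := fun τ => L₂ * ‖s‖^2 * τ)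
        ht0
        (Filter.Eventually.of_forall (fun τ hτ => hbd τ ⟨le_of_lt hτ.1, hτ.2⟩))
        ((continuous_const.mul continuous_id).intervalIntegrable _ _)
      rw [hival] at hle
      calc ‖∫ τ in (0:ℝ)..t, (hessP P (x + τ • s) s - hessP P x s)‖
          ≤ |L₂ * ‖s‖^2 * (t^2/2)| := hle.trans (le_abs_self _)
        _ = L₂ * ‖s‖^2 * (t^2/2) := abs_of_nonneg (by positivity)
    have : χ t - χ 0 = gradient P (x + t • s) - gradient P x - t • (hessP P x s) := by
      simp [hχ]; abel
    rw [this] at hnorm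
    calc ‖_‖ ≤ L₂ * ‖s‖^2 * (t^2/2) := hnorm
      _ = L₂/2 * t^2 * ‖s‖^2 := by ring
  -- Step C
  have hψd : ∀ t : ℝ, HasDerivAt (fun t : ℝ => P (x + t • s)) (⟪gradient P (x + t • s), s⟫) t := by
    intro t
    have hd : DifferentiableAt ℝ P (x + t • s) := (hP.differentiable (by norm_num)).differentiableAt
    have := (hd.hasGradientAt.hasFDerivAt).comp_hasDerivAt t (hl t)
    simpa [Function.comp_def] using this
  have hψcont : Continuous (fun t : ℝ => ⟪gradient P (x + t • s), s⟫) := by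
    exact (hGc.comp hlc).inner continuous_const
  have hFTC : P (x + s) - P x = ∫ t in (0:ℝ)..1, ⟪gradient P (x + t • s), s⟫ := by
    have := intervalIntegral.integral_eq_sub_of_hasDerivAt (f := fun t : ℝ => P (x + t • s))
      (a := 0) (b := 1) (fun t _ => hψd t) (hψcont.intervalIntegrable _ _)
    rw [this]; simp
  have hmono : (∫ t in (0:ℝ)..1, ⟪gradient P (x + t • s), s⟫)
      ≤ ∫ t in (0:ℝ)..1, (⟪gradient P x, s⟫ + t * ⟪hessP P x s, s⟫ + L₂/2 * t^2 * ‖s‖^3) := by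
    apply intervalIntegral.integral_mono_on (by norm_num) (hψcont.intervalIntegrable _ _)
    · exact ((continuous_const.add (continuous_id.mul continuous_const)).add
        ((continuous_const.mul (continuous_pow 2)).mul continuous_const)).intervalIntegrable _ _
    · intro t ht
      have key := stepB t ht
      have expand : ⟪gradient P (x + t • s), s⟫ = ⟪gradient P x, s⟫ + t * ⟪hessP P x s, s⟫
          + ⟪gradient P (x + t • s) - gradient P x - t • (hessP P x s), s⟫ := by
        rw [inner_sub_left, inner_sub_left, real_inner_smul_left]
        ring
      rw [expand]
      have hb : ⟪gradient P (x + t • s) - gradient P x - t • (hessP P x s), s⟫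
          ≤ L₂/2 * t^2 * ‖s‖^3 := by
        calc ⟪gradient P (x + t • s) - gradient P x - t • (hessP P x s), s⟫
            ≤ ‖gradient P (x + t • s) - gradient P x - t • (hessP P x s)‖ * ‖s‖ :=
              real_inner_le_norm _ _
          _ ≤ (L₂/2 * t^2 * ‖s‖^2) * ‖s‖ := by gcongr
          _ = L₂/2 * t^2 * ‖s‖^3 := by ring
      linarith
  have heq3 : (fun t : ℝ => L₂/2 * t^2 * ‖s‖^3) = fun t : ℝ => (L₂/2 * ‖s‖^3) * t^2 := by
    funext t; ring
  have hi1 : IntervalIntegrable (fun _ : ℝ => ⟪gradient P x, s⟫) MeasureTheory.volume 0 1 :=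
    continuous_const.intervalIntegrable _ _
  have hi2 : IntervalIntegrable (fun t : ℝ => t * ⟪hessP P x s, s⟫) MeasureTheory.volume 0 1 :=
    (continuous_id.mul continuous_const).intervalIntegrable _ _
  have hi3 : IntervalIntegrable (fun t : ℝ => L₂/2 * t^2 * ‖s‖^3) MeasureTheory.volume 0 1 :=
    ((continuous_const.mul (continuous_pow 2)).mul continuous_const).intervalIntegrable _ _
  have hcomp : (∫ t in (0:ℝ)..1, (⟪gradient P x, s⟫ + t * ⟪hessP P x s, s⟫ + L₂/2 * t^2 * ‖s‖^3))
      = ⟪gradient P x, s⟫ + (1/2) * ⟪hessP P x s, s⟫ + L₂/6 * ‖s‖^3 := by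
    rw [intervalIntegral.integral_add (hi1.add hi2) hi3, intervalIntegral.integral_add hi1 hi2,
      intervalIntegral.integral_const, intervalIntegral.integral_mul_const, integral_id, heq3,
      intervalIntegral.integral_const_mul, integral_pow]
    norm_num
    ring
  rw [hcomp] at hmono
  linarith [hFTC, hmono]

/-- Negative-curvature step: with `ε₁ = min{1/36, √L₂/(12L₁)}·ε^{3/2}`,
`ε₂ = (√L₂/18)·ε^{1/2}`, `ε ≤ 1`, `M = max{‖g‖, ε}`, if `λ_min(H) ≤ −½√(L₂M)` with unit
eigenvector `u` (for the smallest eigenvalue `lmin`) satisfying `⟪g, u⟫ ≤ 0`, and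
`s = √(M/L₂)·u`, and the estimates are accurate, then
`P(x+s) ≤ P(x) − (1/(36√L₂))M^{3/2}` and `‖g₊‖ ≤ 1 + (L₁/√L₂)√M + M`. -/
theorem statement18 {n : ℕ} (P : En n → ℝ) (L₁ L₂ ε : ℝ)
    (hL₁ : 0 < L₁) (hL₂ : 0 < L₂) (hε : 0 < ε) (hε1 : ε ≤ 1)
    (hP : ContDiff ℝ 2 P)
    (hgradLip : ∀ x x' : En n, ‖gradient P x - gradient P x'‖ ≤ L₁ * ‖x - x'‖)
    (hhessLip : ∀ x x' : En n, ‖hessP P x - hessP P x'‖ ≤ L₂ * ‖x - x'‖)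
    (x s g gp u : En n) (H : En n →L[ℝ] En n) (hH : IsSelfAdjoint H) (lmin : ℝ)
    (hlow : ∀ v : En n, lmin * ‖v‖ ^ 2 ≤ ⟪H v, v⟫)
    (heig : H u = lmin • u)
    (hu : ‖u‖ = 1)
    (hgu : ⟪g, u⟫ ≤ 0)
    (hlmin : lmin ≤ -(1 / 2) * Real.sqrt (L₂ * max ‖g‖ ε))
    (hs : s = Real.sqrt (max ‖g‖ ε / L₂) • u)
    (hge : ‖gradient P x - g‖ ≤ min (1 / 36) (Real.sqrt L₂ / (12 * L₁)) * ε ^ ((3 : ℝ) / 2))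
    (hHe : ‖hessP P x - H‖ ≤ Real.sqrt L₂ / 18 * Real.sqrt ε)
    (hge' : ‖gradient P (x + s) - gp‖ ≤
      min (1 / 36) (Real.sqrt L₂ / (12 * L₁)) * ε ^ ((3 : ℝ) / 2)) :
    P (x + s) ≤ P x - 1 / (36 * Real.sqrt L₂) * (max ‖g‖ ε) ^ ((3 : ℝ) / 2) ∧
    ‖gp‖ ≤ 1 + L₁ / Real.sqrt L₂ * Real.sqrt (max ‖g‖ ε) + max ‖g‖ ε := by
  set M : ℝ := max ‖g‖ ε with hM
  have hMpos : 0 < M := lt_of_lt_of_le hε (le_max_right _ _)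
  have hεM : ε ≤ M := le_max_right _ _
  have hgM : ‖g‖ ≤ M := le_max_left _ _
  set m : ℝ := Real.sqrt M with hm
  set r : ℝ := Real.sqrt L₂ with hr
  set e2 : ℝ := Real.sqrt ε with he2
  have hmpos : 0 < m := Real.sqrt_pos.mpr hMpos
  have hrpos : 0 < r := Real.sqrt_pos.mpr hL₂
  have he2pos : 0 < e2 := Real.sqrt_pos.mpr hε
  have hm2 : m ^ 2 = M := Real.sq_sqrt hMpos.le
  have hr2 : r ^ 2 = L₂ := Real.sq_sqrt hL₂.le
  have he22 : e2 ^ 2 = ε := Real.sq_sqrt hε.le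
  have he2m : e2 ≤ m := Real.sqrt_le_sqrt hεM
  have he21 : e2 ≤ 1 := by
    rw [he2]; simpa using Real.sqrt_le_sqrt hε1
  -- ε ^ (3/2) = ε * e2
  have hrpow : ε ^ ((3 : ℝ)/2) = ε * e2 := by
    rw [show (3:ℝ)/2 = 1 + 1/2 by norm_num, Real.rpow_add hε, Real.rpow_one, he2,
      Real.sqrt_eq_rpow]
  have hMpow : M ^ ((3 : ℝ)/2) = M * m := by
    rw [show (3:ℝ)/2 = 1 + 1/2 by norm_num, Real.rpow_add hMpos, Real.rpow_one,
      hm, Real.sqrt_eq_rpow]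
  -- ε₁ bound
  set ε₁ : ℝ := min (1 / 36) (Real.sqrt L₂ / (12 * L₁)) * ε ^ ((3 : ℝ) / 2) with hε₁def
  have hrpownn : (0:ℝ) ≤ ε ^ ((3 : ℝ)/2) := Real.rpow_nonneg hε.le _
  have hminnn : (0:ℝ) ≤ min (1/36) (Real.sqrt L₂ / (12 * L₁)) :=
    le_min (by norm_num) (by positivity)
  have hε₁nonneg : 0 ≤ ε₁ := mul_nonneg hminnn hrpownn
  have hε₁le : ε₁ ≤ 1/36 * (ε * e2) := by
    rw [hε₁def, hrpow]
    exact mul_le_mul_of_nonneg_right (min_le_left _ _) (by positivity)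
  have hεe2 : ε * e2 ≤ m ^ 2 := by
    calc ε * e2 ≤ ε * 1 := mul_le_mul_of_nonneg_left he21 hε.le
      _ = ε := mul_one ε
      _ ≤ M := hεM
      _ = m ^ 2 := hm2.symm
  have hε₁small : ε₁ ≤ 1/36 := by
    have h1 : ε * e2 ≤ 1 := mul_le_one₀ hε1 he2pos.le he21
    have h2 := mul_le_mul_of_nonneg_left h1 (by norm_num : (0:ℝ) ≤ 1/36)
    linarith
  -- ‖s‖
  have hnorm_s : ‖s‖ = m / r := by
    rw [hs, norm_smul, hu, Real.norm_eq_abs, mul_one,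
      abs_of_nonneg (Real.sqrt_nonneg _), Real.sqrt_div hMpos.le, hm, hr]
  set A : ℝ := m / r with hAdef
  have hApos : 0 < A := div_pos hmpos hrpos
  have hmar : m = A * r := by rw [hAdef, div_mul_cancel₀ m hrpos.ne']
  have hsqrtML : Real.sqrt (M / L₂) = A := by
    rw [Real.sqrt_div hMpos.le, ← hm, ← hr]
  have hlmin' : lmin ≤ -(1/2) * (r * m) := by
    have : Real.sqrt (L₂ * M) = r * m := by rw [Real.sqrt_mul hL₂.le, ← hm, ← hr]
    rw [this] at hlmin; linarith
  -- T1 : inner product of gradient with s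
  have hgs : ⟪g, s⟫ ≤ 0 := by
    rw [hs, real_inner_smul_right]
    exact mul_nonpos_of_nonneg_of_nonpos (Real.sqrt_nonneg _) hgu
  have hT1 : ⟪gradient P x, s⟫ ≤ ε₁ * A := by
    have hsplit : ⟪gradient P x, s⟫ = ⟪g, s⟫ + ⟪gradient P x - g, s⟫ := by
      rw [inner_sub_left]; ring
    have hb : ⟪gradient P x - g, s⟫ ≤ ε₁ * A := by
      calc ⟪gradient P x - g, s⟫ ≤ ‖gradient P x - g‖ * ‖s‖ := real_inner_le_norm _ _
        _ ≤ ε₁ * A := by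
            rw [hnorm_s]
            exact mul_le_mul_of_nonneg_right hge hApos.le
    rw [hsplit]; linarith
  -- T2 : Hessian quadratic form
  have hHs : ⟪H s, s⟫ = lmin * ‖s‖^2 := by
    rw [hs, map_smul, heig]
    rw [real_inner_smul_left, real_inner_smul_left, real_inner_smul_right,
      real_inner_self_eq_norm_sq, hu, norm_smul, Real.norm_eq_abs,
      abs_of_nonneg (Real.sqrt_nonneg _), hu]
    ring
  have hT2 : ⟪hessP P x s, s⟫ ≤ (lmin + r/18 * e2) * A^2 := by
    have hsplit : ⟪hessP P x s, s⟫ = ⟪H s, s⟫ + ⟪(hessP P x - H) s, s⟫ := by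
      rw [ContinuousLinearMap.sub_apply, inner_sub_left]; ring
    have hb : ⟪(hessP P x - H) s, s⟫ ≤ (r/18 * e2) * ‖s‖^2 := by
      calc ⟪(hessP P x - H) s, s⟫ ≤ ‖(hessP P x - H) s‖ * ‖s‖ := real_inner_le_norm _ _
        _ ≤ (‖hessP P x - H‖ * ‖s‖) * ‖s‖ :=
            mul_le_mul_of_nonneg_right (ContinuousLinearMap.le_opNorm _ _) (norm_nonneg _)
        _ ≤ (r/18 * e2) * ‖s‖^2 := by
            have h' := mul_le_mul_of_nonneg_right
              (mul_le_mul_of_nonneg_right hHe (norm_nonneg s)) (norm_nonneg s)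
            rw [pow_two, ← mul_assoc]
            exact h'
    have hsA : ‖s‖^2 = A^2 := by rw [hnorm_s]
    rw [hsA] at hb
    rw [hsplit, hHs, hsA]
    have hexp : (lmin + r/18 * e2) * A^2 = lmin * A^2 + (r/18 * e2) * A^2 := by ring
    rw [hexp]
    linarith [hb]
  -- cubic term
  have hs3 : ‖s‖^3 = A^3 := by rw [hnorm_s]
  have htay := taylor_cubic P L₂ hL₂.le hP hhessLip x s
  rw [hs3] at htay
  have hε₁m : ε₁ ≤ 1/36 * (A*r)^2 := by
    rw [← hmar]; linarith [hε₁le, hεe2]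
  have he2m' : e2 ≤ A * r := by rw [← hmar]; exact he2m
  have hlmin'' : lmin ≤ -(1/2) * (r * (A*r)) := by rw [← hmar]; exact hlmin'
  -- final real inequality for part 1
  have p1 : ε₁ * A ≤ (1/36 * (A*r)^2) * A := mul_le_mul_of_nonneg_right hε₁m hApos.le
  have p2 : lmin * A^2 ≤ (-(1/2) * (r * (A*r))) * A^2 :=
    mul_le_mul_of_nonneg_right hlmin'' (sq_nonneg A)
  have p3 : r/18 * e2 * A^2 ≤ r/18 * (A*r) * A^2 := by
    have := mul_le_mul_of_nonneg_left he2m' (by positivity : (0:ℝ) ≤ r/18)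
    exact mul_le_mul_of_nonneg_right this (sq_nonneg A)
  have part1 : P (x + s) ≤ P x - 1 / (36 * r) * (M ^ ((3:ℝ)/2)) := by
    rw [hMpow]
    have hrhs : P x - 1 / (36 * r) * (M * m) = P x - (A^3 * r^2)/36 := by
      have : M * m = m^2 * m := by rw [hm2]
      rw [this, hmar]; field_simp
    rw [hrhs]
    have q1 : (1/36 * (A*r)^2) * A = A^3*r^2/36 := by ring
    have q2 : (-(1/2) * (r * (A*r))) * A^2 = -(A^3*r^2)/2 := by ring
    have q3 : r/18 * (A*r) * A^2 = A^3*r^2/18 := by ring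
    rw [q1] at p1; rw [q2] at p2; rw [q3] at p3
    have hsum : ε₁ * A + 1/2 * ((lmin + r/18 * e2) * A^2) + L₂/6 * A^3 ≤ -(A^3 * r^2)/36 := by
      have expand : ε₁ * A + 1/2 * ((lmin + r/18 * e2) * A^2) + r^2/6 * A^3
          = ε₁*A + 1/2*(lmin*A^2) + 1/2*(r/18*e2*A^2) + r^2/6*A^3 := by ring
      rw [← hr2, expand]
      linarith [p1, p2, p3]
    have hT2' : 1/2 * ⟪hessP P x s, s⟫ ≤ 1/2 * ((lmin + r/18 * e2) * A^2) := by linarith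
    linarith [htay, hT1, hT2']
  refine ⟨part1, ?_⟩
  -- Part 2
  have hdecomp : gp = -(gradient P (x + s) - gp) + (gradient P (x + s) - gradient P x)
      + (gradient P x - g) + g := by abel
  have hlip : ‖gradient P (x + s) - gradient P x‖ ≤ L₁ * A := by
    have h := hgradLip (x + s) x
    have : x + s - x = s := by abel
    rw [this, hnorm_s] at h
    exact h
  have htri : ‖gp‖ ≤ ε₁ + L₁ * A + ε₁ + ‖g‖ := by
    set v1 : En n := -(gradient P (x + s) - gp) with hv1
    set v2 : En n := gradient P (x + s) - gradient P x with hv2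
    set v3 : En n := gradient P x - g with hv3
    have t1 : ‖v1 + v2 + v3 + g‖ ≤ ‖v1 + v2 + v3‖ + ‖g‖ := norm_add_le _ _
    have t2 : ‖v1 + v2 + v3‖ ≤ ‖v1 + v2‖ + ‖v3‖ := norm_add_le _ _
    have t3 : ‖v1 + v2‖ ≤ ‖v1‖ + ‖v2‖ := norm_add_le _ _
    have hv1n : ‖v1‖ ≤ ε₁ := by rw [hv1, norm_neg]; exact hge'
    have hv3n : ‖v3‖ ≤ ε₁ := hge
    have hgpval : ‖gp‖ = ‖v1 + v2 + v3 + g‖ := by rw [← hdecomp]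
    rw [hgpval]
    linarith [hlip]
  have hLA : L₁ * A = L₁ / r * m := by rw [hAdef]; ring
  calc ‖gp‖ ≤ ε₁ + L₁ * A + ε₁ + ‖g‖ := htri
    _ ≤ 1 + L₁ / r * m + M := by rw [hLA] at *; linarith [hε₁small, hgM]
    _ = 1 + L₁ / Real.sqrt L₂ * Real.sqrt M + M := by rw [← hr, ← hm]
end
end
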